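/- Let B be a skew-symmetric ℤ-valued bilinear form on a lattice N, and set π1(n) = B(n, ·) ∈ M = Hom(N, ℤ). Then for all n1, n2 ∈ N one has the bracket formula [z^{n1}∂_{π1(n1)}, z^{n2}∂_{π1(n2)}] = B(n1, n2) · z^{n1+n2} ∂_{π1(n1+n2)}. In particular, the k-submodule of derivations of k[N] spanned by the elements z^n ∂_{π1(n)}, n ∈ N, is closed under the commutator bracket, i.e., forms a Lie subalgebra. -/

import Mathlib

/-- For a skew-symmetric bilinear form `B` on a lattice `N` and `π1(n) = B(n,·)`,
the derivations `z^n ∂_{π1(n)}` satisfy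
`[z^{n1}∂_{π1(n1)}, z^{n2}∂_{π1(n2)}] = B(n1,n2)·z^{n1+n2}∂_{π1(n1+n2)}`;
in particular their span is closed under the commutator bracket. -/
theorem skew_log_derivations_lie_subalgebra
    (k N : Type*) [CommRing k] [AddCommGroup N] [Module.Free ℤ N] [Module.Finite ℤ N]
    (B : N →ₗ[ℤ] N →ₗ[ℤ] ℤ) (hB : ∀ a b : N, B a b = - B b a)
    (D : N → (AddMonoidAlgebra k N →ₗ[k] AddMonoidAlgebra k N))
    (hD : ∀ n p : N, D n (AddMonoidAlgebra.single p 1) =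
      ((B n p : ℤ) : k) • AddMonoidAlgebra.single (n + p) (1 : k))
    (n1 n2 : N) :
    (D n1 ∘ₗ D n2 - D n2 ∘ₗ D n1 = ((B n1 n2 : ℤ) : k) • D (n1 + n2)) ∧
    (D n1 ∘ₗ D n2 - D n2 ∘ₗ D n1 ∈ Submodule.span k (Set.range D)) := by
  have comp : ∀ m n p : N, (D m) ((D n) (AddMonoidAlgebra.single p (1 : k))) =
      ((B n p * B m (n + p) : ℤ) : k) • AddMonoidAlgebra.single (m + (n + p)) (1 : k) := by
    intro m n p
    rw [hD n p, map_smul, hD m (n + p), smul_smul, ← Int.cast_mul]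
  have single1 : ∀ (p : N) (b : k),
      (AddMonoidAlgebra.single p b : AddMonoidAlgebra k N) = b • AddMonoidAlgebra.single p 1 := by
    intro p b
    rw [AddMonoidAlgebra.smul_single, smul_eq_mul, mul_one]
  have main : ∀ (p : N) (b : k),
      (D n1) ((D n2) (AddMonoidAlgebra.single p b)) - (D n2) ((D n1) (AddMonoidAlgebra.single p b)) =
        ((B n1 n2 : ℤ) : k) • (D (n1 + n2)) (AddMonoidAlgebra.single p b) := by
    intro p b
    rw [single1, map_smul, map_smul, map_smul, map_smul, map_smul,
      comp n1 n2 p, comp n2 n1 p, hD (n1 + n2) p, smul_smul, smul_smul, smul_smul, smul_smul]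
    have hs : n2 + (n1 + p) = n1 + (n2 + p) := by abel
    have hs2 : n1 + n2 + p = n1 + (n2 + p) := by abel
    rw [hs, hs2, ← sub_smul]
    congr 1
    have e1 := hB n2 n1
    have e2 : B n1 (n2 + p) = B n1 n2 + B n1 p := by simp [map_add]
    have e3 : B n2 (n1 + p) = B n2 n1 + B n2 p := by simp [map_add]
    have e4 : B (n1 + n2) p = B n1 p + B n2 p := by simp [LinearMap.map_add]
    have hint : (B n2 p * B n1 (n2 + p) - B n1 p * B n2 (n1 + p) : ℤ)
        = B n1 n2 * B (n1 + n2) p := by rw [e2, e3, e4, e1]; ring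
    rw [← mul_sub, ← Int.cast_sub, hint, Int.cast_mul]
    ring
  have key : D n1 ∘ₗ D n2 - D n2 ∘ₗ D n1 = ((B n1 n2 : ℤ) : k) • D (n1 + n2) := by
    refine AddMonoidAlgebra.lhom_ext' fun p => LinearMap.ext fun b => ?_
    exact main p b
  refine ⟨key, ?_⟩
  rw [key]
  exact Submodule.smul_mem _ _ (Submodule.subset_span ⟨n1 + n2, rfl⟩)
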